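/- Let X, Y, Z be symmetric d×d real matrices such that ⟨Xz, z⟩ − ⟨Yz', z'⟩ ≤ ⟨Z(z−z'), z−z'⟩ for all z, z' ∈ ℝ^d, and let 0 < ε < (max(‖X‖, ‖Y‖, 2‖Z‖))⁻¹, where ‖·‖ is the operator norm. For a symmetric matrix A define the sup-convolution A^ε(z) := sup_{ξ∈ℝ^d} (⟨Aξ, ξ⟩ − ε⁻¹‖z−ξ‖²) and the inf-convolution A_ε(z) := inf_{ξ∈ℝ^d} (⟨Aξ, ξ⟩ + ε⁻¹‖z−ξ‖²). Then all these suprema and infima are finite, and: (i) for all ζ, α ∈ ℝ^d, X^ε(ζ) − Y_ε(α) ≤ Z^{2ε}(ζ−α); (ii) for all z ∈ ℝ^d, −ε⁻¹‖z‖² ≤ X^ε(z), ⟨Xz, z⟩ ≤ X^ε(z), Y_ε(z) ≤ ⟨Yz, z⟩, and Y_ε(z) ≤ ε⁻¹‖z‖². -/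

import Mathlib

open Matrix

/-- The sup-convolution of the quadratic form of a symmetric matrix `A`:
`A^ε(z) = sup_{ξ} (⟨Aξ, ξ⟩ − ε⁻¹‖z−ξ‖²)`. -/
noncomputable def supConvQF {d : ℕ} (A : Matrix (Fin d) (Fin d) ℝ) (ε : ℝ)
    (z : EuclideanSpace ℝ (Fin d)) : ℝ :=
  sSup {y : ℝ | ∃ ξ : EuclideanSpace ℝ (Fin d), y = A.mulVec ξ ⬝ᵥ ξ - ε⁻¹ * ‖z - ξ‖ ^ 2}

/-- The inf-convolution of the quadratic form of a symmetric matrix `A`: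
`A_ε(z) = inf_{ξ} (⟨Aξ, ξ⟩ + ε⁻¹‖z−ξ‖²)`. -/
noncomputable def infConvQF {d : ℕ} (A : Matrix (Fin d) (Fin d) ℝ) (ε : ℝ)
    (z : EuclideanSpace ℝ (Fin d)) : ℝ :=
  sInf {y : ℝ | ∃ ξ : EuclideanSpace ℝ (Fin d), y = A.mulVec ξ ⬝ᵥ ξ + ε⁻¹ * ‖z - ξ‖ ^ 2}

open RealInnerProductSpace

private lemma quad_eq_inner {d : ℕ} (A : Matrix (Fin d) (Fin d) ℝ)
    (ξ : EuclideanSpace ℝ (Fin d)) :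
    A.mulVec ξ ⬝ᵥ ξ = ⟪(Matrix.toEuclideanCLM (𝕜 := ℝ) A) ξ, ξ⟫ := by
  have h := Matrix.ofLp_toEuclideanCLM (n := Fin d) (𝕜 := ℝ) A ξ
  have h2 : ∀ i, (Matrix.toEuclideanCLM (𝕜 := ℝ) A) ξ i = A.mulVec ξ i := fun i => congrFun h i
  simp [PiLp.inner_apply, h2, dotProduct, mulVec, mul_comm]

private lemma quad_abs_le {d : ℕ} (A : Matrix (Fin d) (Fin d) ℝ)
    (ξ : EuclideanSpace ℝ (Fin d)) :
    |A.mulVec ξ ⬝ᵥ ξ| ≤ ‖Matrix.toEuclideanCLM (𝕜 := ℝ) A‖ * ‖ξ‖ ^ 2 := by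
  rw [quad_eq_inner]
  calc |⟪(Matrix.toEuclideanCLM (𝕜 := ℝ) A) ξ, ξ⟫| ≤ ‖(Matrix.toEuclideanCLM (𝕜 := ℝ) A) ξ‖ * ‖ξ‖ :=
        abs_real_inner_le_norm _ _
    _ ≤ (‖Matrix.toEuclideanCLM (𝕜 := ℝ) A‖ * ‖ξ‖) * ‖ξ‖ := by
        gcongr; exact (Matrix.toEuclideanCLM (𝕜 := ℝ) A).le_opNorm ξ
    _ = ‖Matrix.toEuclideanCLM (𝕜 := ℝ) A‖ * ‖ξ‖ ^ 2 := by ring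

private lemma bound_aux (b c nz nw : ℝ) (hc : 0 ≤ c) (hb : c < b) (hnz : 0 ≤ nz) (hnw : 0 ≤ nw) :
    c * (nz + nw) ^ 2 - b * nw ^ 2 ≤ c * b / (b - c) * nz ^ 2 := by
  rw [div_mul_eq_mul_div, le_div_iff₀ (by linarith)]
  nlinarith [sq_nonneg ((b - c) * nw - c * nz), mul_nonneg hc hnz, mul_nonneg hc hnw,
    mul_nonneg (mul_nonneg hc hnz) hnw]

private lemma key_bound {d : ℕ} (A : Matrix (Fin d) (Fin d) ℝ) (b : ℝ)
    (hb : ‖Matrix.toEuclideanCLM (𝕜 := ℝ) A‖ < b) (z ξ : EuclideanSpace ℝ (Fin d)) :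
    |A.mulVec ξ ⬝ᵥ ξ| - b * ‖z - ξ‖ ^ 2 ≤
      ‖Matrix.toEuclideanCLM (𝕜 := ℝ) A‖ * b / (b - ‖Matrix.toEuclideanCLM (𝕜 := ℝ) A‖)
        * ‖z‖ ^ 2 := by
  set c := ‖Matrix.toEuclideanCLM (𝕜 := ℝ) A‖ with hc
  have hc0 : 0 ≤ c := norm_nonneg _
  have hξ : ‖ξ‖ ≤ ‖z‖ + ‖z - ξ‖ := by
    calc ‖ξ‖ = ‖z - (z - ξ)‖ := by congr 1; abel
      _ ≤ ‖z‖ + ‖z - ξ‖ := norm_sub_le _ _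
  have h1 : |A.mulVec ξ ⬝ᵥ ξ| ≤ c * (‖z‖ + ‖z - ξ‖) ^ 2 :=
    (quad_abs_le A ξ).trans (mul_le_mul_of_nonneg_left
      (pow_le_pow_left₀ (norm_nonneg ξ) hξ 2) hc0)
  have h2 := bound_aux b c ‖z‖ ‖z - ξ‖ hc0 hb (norm_nonneg _) (norm_nonneg _)
  linarith

/-- **Sup/inf convolutions of matrices preserve the matrix inequality.**
If symmetric matrices `X, Y, Z` satisfy `⟨Xz, z⟩ − ⟨Yz', z'⟩ ≤ ⟨Z(z−z'), z−z'⟩` and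
`0 < ε < (max(‖X‖, ‖Y‖, 2‖Z‖))⁻¹` (operator norms), then all the sup/inf convolutions are
finite, `X^ε(ζ) − Y_ε(α) ≤ Z^{2ε}(ζ−α)`, and the monotonicity bounds hold. -/
theorem supInfConv_matrix_inequality {d : ℕ} (X Y Z : Matrix (Fin d) (Fin d) ℝ)
    (hX : X.IsSymm) (hY : Y.IsSymm) (hZ : Z.IsSymm)
    (h : ∀ z z' : EuclideanSpace ℝ (Fin d),
      X.mulVec z ⬝ᵥ z - Y.mulVec z' ⬝ᵥ z' ≤ Z.mulVec (z - z') ⬝ᵥ (z - z'))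
    (ε : ℝ) (hε0 : 0 < ε)
    (hε : ε < (max (max ‖Matrix.toEuclideanCLM (𝕜 := ℝ) X‖ ‖Matrix.toEuclideanCLM (𝕜 := ℝ) Y‖)
        (2 * ‖Matrix.toEuclideanCLM (𝕜 := ℝ) Z‖))⁻¹) :
    (∀ z : EuclideanSpace ℝ (Fin d),
        BddAbove {y : ℝ | ∃ ξ : EuclideanSpace ℝ (Fin d),
          y = X.mulVec ξ ⬝ᵥ ξ - ε⁻¹ * ‖z - ξ‖ ^ 2} ∧
        BddBelow {y : ℝ | ∃ ξ : EuclideanSpace ℝ (Fin d),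
          y = Y.mulVec ξ ⬝ᵥ ξ + ε⁻¹ * ‖z - ξ‖ ^ 2} ∧
        BddAbove {y : ℝ | ∃ ξ : EuclideanSpace ℝ (Fin d),
          y = Z.mulVec ξ ⬝ᵥ ξ - (2 * ε)⁻¹ * ‖z - ξ‖ ^ 2}) ∧
    (∀ ζ α : EuclideanSpace ℝ (Fin d),
        supConvQF X ε ζ - infConvQF Y ε α ≤ supConvQF Z (2 * ε) (ζ - α)) ∧
    (∀ z : EuclideanSpace ℝ (Fin d),
        -ε⁻¹ * ‖z‖ ^ 2 ≤ supConvQF X ε z ∧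
        X.mulVec z ⬝ᵥ z ≤ supConvQF X ε z ∧
        infConvQF Y ε z ≤ Y.mulVec z ⬝ᵥ z ∧
        infConvQF Y ε z ≤ ε⁻¹ * ‖z‖ ^ 2) := by
  set nX := ‖Matrix.toEuclideanCLM (𝕜 := ℝ) X‖ with hnX
  set nY := ‖Matrix.toEuclideanCLM (𝕜 := ℝ) Y‖ with hnY
  set nZ := ‖Matrix.toEuclideanCLM (𝕜 := ℝ) Z‖ with hnZ
  set M := max (max nX nY) (2 * nZ) with hM
  have hM0 : 0 ≤ M := le_trans (by positivity) (le_max_right _ _)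
  have hMpos : 0 < M := by
    rcases hM0.lt_or_eq with h' | h'
    · exact h'
    · rw [← h'] at hε; simp at hε; linarith
  have hMε : M < ε⁻¹ := by
    have h1 : M * ε < M * M⁻¹ := mul_lt_mul_of_pos_left hε hMpos
    rw [mul_inv_cancel₀ hMpos.ne'] at h1
    rw [lt_inv_comm₀] <;> nlinarith
  have hεinv : 0 < ε⁻¹ := inv_pos.mpr hε0
  have hXb : nX < ε⁻¹ := lt_of_le_of_lt (le_trans (le_max_left _ _) (le_max_left _ _)) hMε
  have hYb : nY < ε⁻¹ := lt_of_le_of_lt (le_trans (le_max_right _ _) (le_max_left _ _)) hMε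
  have hZb : nZ < (2 * ε)⁻¹ := by
    have : 2 * nZ < ε⁻¹ := lt_of_le_of_lt (le_max_right _ _) hMε
    rw [mul_inv]
    nlinarith [norm_nonneg (Matrix.toEuclideanCLM (𝕜 := ℝ) Z)]
  -- boundedness
  have bddX : ∀ z : EuclideanSpace ℝ (Fin d), BddAbove {y : ℝ | ∃ ξ : EuclideanSpace ℝ (Fin d),
      y = X.mulVec ξ ⬝ᵥ ξ - ε⁻¹ * ‖z - ξ‖ ^ 2} := by
    intro z
    refine ⟨nX * ε⁻¹ / (ε⁻¹ - nX) * ‖z‖ ^ 2, ?_⟩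
    rintro y ⟨ξ, rfl⟩
    have := key_bound X ε⁻¹ hXb z ξ
    have habs := le_abs_self (X.mulVec ξ ⬝ᵥ ξ)
    linarith
  have bddY : ∀ z : EuclideanSpace ℝ (Fin d), BddBelow {y : ℝ | ∃ ξ : EuclideanSpace ℝ (Fin d),
      y = Y.mulVec ξ ⬝ᵥ ξ + ε⁻¹ * ‖z - ξ‖ ^ 2} := by
    intro z
    refine ⟨-(nY * ε⁻¹ / (ε⁻¹ - nY) * ‖z‖ ^ 2), ?_⟩
    rintro y ⟨ξ, rfl⟩
    have := key_bound Y ε⁻¹ hYb z ξ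
    have habs := neg_abs_le (Y.mulVec ξ ⬝ᵥ ξ)
    linarith
  have bddZ : ∀ z : EuclideanSpace ℝ (Fin d), BddAbove {y : ℝ | ∃ ξ : EuclideanSpace ℝ (Fin d),
      y = Z.mulVec ξ ⬝ᵥ ξ - (2 * ε)⁻¹ * ‖z - ξ‖ ^ 2} := by
    intro z
    refine ⟨nZ * (2 * ε)⁻¹ / ((2 * ε)⁻¹ - nZ) * ‖z‖ ^ 2, ?_⟩
    rintro y ⟨ξ, rfl⟩
    have := key_bound Z (2 * ε)⁻¹ hZb z ξ
    have habs := le_abs_self (Z.mulVec ξ ⬝ᵥ ξ)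
    linarith
  refine ⟨fun z => ⟨bddX z, bddY z, bddZ z⟩, ?_, ?_⟩
  · -- main inequality
    intro ζ α
    rw [sub_le_iff_le_add]
    refine csSup_le ⟨_, ⟨ζ, rfl⟩⟩ ?_
    rintro y ⟨ξ, rfl⟩
    rw [← sub_le_iff_le_add']
    refine le_csInf ⟨_, ⟨α, rfl⟩⟩ ?_
    rintro y' ⟨η, rfl⟩
    have hZmem : Z.mulVec (ξ - η) ⬝ᵥ (ξ - η) - (2 * ε)⁻¹ * ‖(ζ - α) - (ξ - η)‖ ^ 2 ≤
        supConvQF Z (2 * ε) (ζ - α) := le_csSup (bddZ _) ⟨ξ - η, rfl⟩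
    have hq := h ξ η
    have hnorm : ‖(ζ - α) - (ξ - η)‖ ^ 2 ≤ 2 * ‖ζ - ξ‖ ^ 2 + 2 * ‖α - η‖ ^ 2 := by
      have he : (ζ - α) - (ξ - η) = (ζ - ξ) - (α - η) := by abel
      rw [he]
      have h1 := norm_sub_le (ζ - ξ) (α - η)
      nlinarith [norm_nonneg (ζ - ξ), norm_nonneg (α - η), norm_nonneg ((ζ - ξ) - (α - η)), sq_nonneg (‖ζ - ξ‖ - ‖α - η‖)]
    have h2e : (2 * ε)⁻¹ * ‖(ζ - α) - (ξ - η)‖ ^ 2 ≤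
        ε⁻¹ * ‖ζ - ξ‖ ^ 2 + ε⁻¹ * ‖α - η‖ ^ 2 := by
      rw [mul_inv]
      nlinarith [norm_nonneg ((ζ - α) - (ξ - η)), sq_nonneg ‖(ζ - α) - (ξ - η)‖]
    linarith
  · -- bounds
    intro z
    have hzz : ‖z - z‖ = 0 := by simp
    refine ⟨?_, ?_, ?_, ?_⟩
    · refine le_csSup (bddX z) ⟨0, ?_⟩
      simp
    · refine le_csSup (bddX z) ⟨z, ?_⟩
      simp
    · refine csInf_le (bddY z) ⟨z, ?_⟩
      simp
    · have hmem : (Y.mulVec (0 : EuclideanSpace ℝ (Fin d)) ⬝ᵥ (0 : EuclideanSpace ℝ (Fin d))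
          + ε⁻¹ * ‖z - (0 : EuclideanSpace ℝ (Fin d))‖ ^ 2) ∈
          {y : ℝ | ∃ ξ : EuclideanSpace ℝ (Fin d), y = Y.mulVec ξ ⬝ᵥ ξ + ε⁻¹ * ‖z - ξ‖ ^ 2} :=
        ⟨0, rfl⟩
      have := csInf_le (bddY z) hmem
      simp at this; exact this
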